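/- If m is an even integer with m > 0, then the coefficient of x^{m+1} in (x/log(1+x))^m is 0. -/

import Mathlib

open PowerSeries

noncomputable def uu : PowerSeries ℚ := PowerSeries.mk fun j => (-1)^j

noncomputable def sg : PowerSeries ℚ := -(X * uu)

lemma one_add_X_mul_uu : ((1 + X) * uu : PowerSeries ℚ) = 1 := by
  ext k
  rw [PowerSeries.coeff_mul]
  cases k with
  | zero => simp [uu]
  | succ n =>
    rw [Finset.Nat.sum_antidiagonal_eq_sum_range_succ_mk]
    rw [Finset.sum_range_succ']
    simp only [uu, PowerSeries.coeff_mk]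
    simp only [map_add, PowerSeries.coeff_one, PowerSeries.coeff_X, PowerSeries.coeff_one]
    simp [Finset.sum_ite_eq, pow_succ]

lemma hockey (n j : ℕ) : ∑ b ∈ Finset.range (j+1), (n+b).choose b = (n+j+1).choose j := by
  induction j with
  | zero => simp
  | succ j ih =>
    rw [Finset.sum_range_succ, ih]
    exact (Nat.choose_succ_succ (n+j+1) j).symm

lemma coeff_uu_pow (n j : ℕ) : (PowerSeries.coeff j) (uu^(n+1)) = (-1)^j * ((n+j).choose j) := by
  induction n generalizing j with
  | zero => simp [uu]
  | succ n ih =>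
    rw [pow_succ', PowerSeries.coeff_mul, Finset.Nat.sum_antidiagonal_eq_sum_range_succ_mk]
    have : ∀ i ∈ Finset.range (j+1), (PowerSeries.coeff i) uu * (PowerSeries.coeff (j - i)) (uu^(n+1)) = (-1)^j * ((n+(j-i)).choose (j-i)) := by
      intro i hi
      simp only [Finset.mem_range] at hi
      rw [ih, uu, PowerSeries.coeff_mk, ← mul_assoc, ← pow_add]
      congr 2
      omega
    rw [Finset.sum_congr rfl this, ← Finset.mul_sum]
    congr 1
    rw [← Nat.cast_sum]
    norm_cast
    rw [show n+1+j = n+j+1 by omega, ← hockey n j, ← Finset.sum_range_reflect]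
    apply Finset.sum_congr rfl
    intro i hi
    simp only [Finset.mem_range] at hi
    have h2 : j - (j + 1 - 1 - i) = i := by omega
    rw [h2]


lemma sg_pow (n : ℕ) : sg^n = (-1)^n * (X^n * uu^n) := by
  rw [sg, neg_pow, mul_pow]

lemma coeff_sg_pow (n k : ℕ) :
    (PowerSeries.coeff k) (sg^n) = if n ≤ k then (-1:ℚ)^k * ((k-1).choose (k-n)) else 0 := by
  have hC : ((-1 : PowerSeries ℚ)^n) = PowerSeries.C ((-1)^n) := by
    rw [map_pow, map_neg, map_one]
  rw [sg_pow, hC, PowerSeries.coeff_C_mul, PowerSeries.coeff_X_pow_mul']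
  split_ifs with h
  · cases n with
    | zero =>
      simp only [pow_zero, PowerSeries.coeff_one, one_mul, Nat.sub_zero]
      rcases Nat.eq_zero_or_pos k with rfl | hk
      · simp
      · rw [if_neg (by omega), Nat.choose_eq_zero_of_lt (by omega), Nat.cast_zero, mul_zero]
    | succ N =>
      rw [coeff_uu_pow, ← mul_assoc, ← pow_add, show N + 1 + (k - (N+1)) = k by omega,
        show N + (k - (N+1)) = k - 1 by omega]
  · exact mul_zero _

lemma coeff_sg_pow_of_lt {k n : ℕ} (h : k < n) : (PowerSeries.coeff k) (sg^n) = 0 := by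
  rw [coeff_sg_pow, if_neg (by omega)]

noncomputable def T (F : PowerSeries ℚ) : PowerSeries ℚ :=
  PowerSeries.mk fun k => ∑ n ∈ Finset.range (k+1),
    (PowerSeries.coeff n) F * (PowerSeries.coeff k) (sg^n)

lemma coeff_T (F : PowerSeries ℚ) {k N : ℕ} (h : k ≤ N) :
    (PowerSeries.coeff k) (T F) = ∑ n ∈ Finset.range (N+1),
      (PowerSeries.coeff n) F * (PowerSeries.coeff k) (sg^n) := by
  rw [T, PowerSeries.coeff_mk]
  apply Finset.sum_subset (Finset.range_subset_range.2 (by omega))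
  intro x hx hx'
  simp only [Finset.mem_range] at hx hx'
  rw [coeff_sg_pow_of_lt (by omega), mul_zero]

lemma T_one : T 1 = 1 := by
  ext k
  rw [T, PowerSeries.coeff_mk]
  rw [Finset.sum_eq_single 0]
  · simp
  · intro n hn hn0
    rw [PowerSeries.coeff_one, if_neg hn0, zero_mul]
  · simp


lemma T_mul (F G : PowerSeries ℚ) : T (F * G) = T F * T G := by
  ext k
  set c : ℕ → ℚ := fun j => (PowerSeries.coeff k) (sg^j) with hc
  have key : ∀ p : ℕ × ℕ, (fun p : ℕ × ℕ => (PowerSeries.coeff p.1) F *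
      (PowerSeries.coeff p.2) G * c (p.1 + p.2)) = fun p => (PowerSeries.coeff p.1) F *
      (PowerSeries.coeff p.2) G * c (p.1 + p.2) := fun _ => rfl
  set f : ℕ × ℕ → ℚ := fun p => (PowerSeries.coeff p.1) F *
      (PowerSeries.coeff p.2) G * c (p.1 + p.2) with hf
  have hsq : (PowerSeries.coeff k) (T F * T G)
      = ∑ p ∈ Finset.range (k+1) ×ˢ Finset.range (k+1), f p := by
    rw [PowerSeries.coeff_mul, Finset.Nat.sum_antidiagonal_eq_sum_range_succ_mk]
    have h1 : ∀ i ∈ Finset.range (k+1),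
        (PowerSeries.coeff i) (T F) * (PowerSeries.coeff (k - i)) (T G)
        = ∑ n ∈ Finset.range (k+1), ∑ m ∈ Finset.range (k+1),
            ((PowerSeries.coeff n) F * (PowerSeries.coeff i) (sg^n)) *
            ((PowerSeries.coeff m) G * (PowerSeries.coeff (k-i)) (sg^m)) := by
      intro i hi
      simp only [Finset.mem_range] at hi
      rw [coeff_T F (show i ≤ k by omega), coeff_T G (show k - i ≤ k by omega),
        Finset.sum_mul_sum]
    rw [Finset.sum_congr rfl h1, Finset.sum_comm]
    rw [Finset.sum_product]
    apply Finset.sum_congr rfl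
    intro n _
    rw [Finset.sum_comm]
    apply Finset.sum_congr rfl
    intro m _
    have : ∀ i ∈ Finset.range (k+1),
        ((PowerSeries.coeff n) F * (PowerSeries.coeff i) (sg^n)) *
        ((PowerSeries.coeff m) G * (PowerSeries.coeff (k-i)) (sg^m))
        = ((PowerSeries.coeff n) F * (PowerSeries.coeff m) G) *
          ((PowerSeries.coeff i) (sg^n) * (PowerSeries.coeff (k-i)) (sg^m)) := by
      intro i _; ring
    rw [Finset.sum_congr rfl this, ← Finset.mul_sum, hf]
    simp only []
    congr 1
    rw [hc]
    simp only []
    rw [pow_add sg n m, PowerSeries.coeff_mul, Finset.Nat.sum_antidiagonal_eq_sum_range_succ_mk]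
  have htri : (PowerSeries.coeff k) (T (F * G))
      = ∑ p ∈ Finset.range (k+1) ×ˢ Finset.range (k+1), f p := by
    rw [coeff_T _ (le_refl k)]
    have h1 : ∀ j ∈ Finset.range (k+1),
        (PowerSeries.coeff j) (F * G) * (PowerSeries.coeff k) (sg^j)
        = ∑ p ∈ Finset.HasAntidiagonal.antidiagonal j, f p := by
      intro j _
      rw [PowerSeries.coeff_mul, Finset.sum_mul]
      apply Finset.sum_congr rfl
      intro p hp
      rw [Finset.HasAntidiagonal.mem_antidiagonal] at hp
      rw [hf]; simp only []
      rw [hp]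
    rw [Finset.sum_congr rfl h1, ← Finset.sum_biUnion]
    · apply Finset.sum_subset
      · intro p hp
        simp only [Finset.mem_biUnion, Finset.mem_range] at hp
        obtain ⟨j, hj, hpj⟩ := hp
        rw [Finset.HasAntidiagonal.mem_antidiagonal] at hpj
        simp only [Finset.mem_product, Finset.mem_range]
        omega
      · intro p hp hp'
        simp only [Finset.mem_product, Finset.mem_range] at hp
        have hk : k < p.1 + p.2 := by
          by_contra hle
          push_neg at hle
          apply hp'
          simp only [Finset.mem_biUnion, Finset.mem_range]
          exact ⟨p.1 + p.2, by omega, Finset.HasAntidiagonal.mem_antidiagonal.2 rfl⟩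
        rw [hf]; simp only []
        rw [hc]; simp only []
        rw [coeff_sg_pow_of_lt hk, mul_zero]
    · intro a _ b _ hab
      simp only [Function.onFun]
      rw [Finset.disjoint_left]
      intro p hpa hpb
      rw [Finset.HasAntidiagonal.mem_antidiagonal] at hpa hpb
      exact hab (by omega)
  rw [htri, hsq]

lemma S_eq (K : ℕ) : ∀ R : ℕ, ∑ j ∈ Finset.range (K+1), (-1:ℚ)^j * (K.choose j) / (j+R+1)
    = 1/((R+1) * ((K+R+1).choose K)) := by
  induction K with
  | zero => intro R; simp
  | succ K ih =>
    intro R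
    rw [Finset.sum_range_succ']
    have split : ∀ i ∈ Finset.range (K+1),
        (-1:ℚ)^(i+1) * (((K+1).choose (i+1) : ℕ) : ℚ) / (((i+1:ℕ):ℚ)+(R:ℚ)+1)
        = -((-1:ℚ)^i * ((K.choose i : ℕ):ℚ) / ((i:ℚ)+((R+1:ℕ):ℚ)+1))
          + (-1:ℚ)^(i+1) * ((K.choose (i+1) : ℕ):ℚ) / (((i+1:ℕ):ℚ)+(R:ℚ)+1) := by
      intro i _
      rw [Nat.choose_succ_succ K i]
      push_cast
      ring
    rw [Finset.sum_congr rfl split, Finset.sum_add_distrib, Finset.sum_neg_distrib, ih (R+1)]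
    have ftop : (-1:ℚ)^(K+1) * ((K.choose (K+1) : ℕ):ℚ) / (((K+1:ℕ):ℚ)+(R:ℚ)+1) = 0 := by
      rw [Nat.choose_succ_self]; simp
    have e2 : (∑ i ∈ Finset.range (K+1),
        (-1:ℚ)^(i+1) * ((K.choose (i+1) : ℕ):ℚ) / (((i+1:ℕ):ℚ)+(R:ℚ)+1))
        = (∑ j ∈ Finset.range (K+1), (-1:ℚ)^j * ((K.choose j : ℕ):ℚ) / ((j:ℚ)+(R:ℚ)+1))
          - (-1:ℚ)^0 * ((K.choose 0 : ℕ):ℚ) / ((0:ℚ)+(R:ℚ)+1) := by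
      have h1 := Finset.sum_range_succ'
        (fun j => (-1:ℚ)^j * ((K.choose j : ℕ):ℚ) / ((j:ℚ)+(R:ℚ)+1)) K
      have h2 := Finset.sum_range_succ
        (fun i => (-1:ℚ)^(i+1) * ((K.choose (i+1) : ℕ):ℚ) / (((i+1:ℕ):ℚ)+(R:ℚ)+1)) K
      rw [h2, ftop]
      push_cast at h1 ⊢
      linarith
    rw [e2, ih R]
    -- now pure arithmetic with choose
    have hsymm1 : (K+R+1).choose (R+1) = (K+R+1).choose K := by
      rw [← Nat.choose_symm (by omega : R+1 ≤ K+R+1)]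
      congr 1; omega
    have hsymm2 : (K+R+2).choose (R+2) = (K+R+2).choose K := by
      rw [← Nat.choose_symm (by omega : R+2 ≤ K+R+2)]
      congr 1; omega
    have hmul1 : (K+R+2) * ((K+R+1).choose K) = ((K+R+2).choose (K+1)) * (K+1) := by
      have := Nat.add_one_mul_choose_eq (K+R+1) K
      simpa [Nat.succ_eq_add_one, show K+R+1+1 = K+R+2 by omega] using this
    have hmul2 : (K+R+2) * ((K+R+1).choose K) = ((K+R+2).choose K) * (R+2) := by
      have := Nat.add_one_mul_choose_eq (K+R+1) (R+1)
      rw [hsymm1] at this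
      rw [← hsymm2]
      simpa [Nat.succ_eq_add_one, show K+R+1+1 = K+R+2 by omega,
        show R+1+1 = R+2 by omega] using this
    have pa : (0:ℚ) < ((K+R+1).choose K : ℚ) := by
      exact_mod_cast Nat.choose_pos (by omega)
    have pb : (0:ℚ) < ((K+R+2).choose K : ℚ) := by
      exact_mod_cast Nat.choose_pos (by omega)
    have pc : (0:ℚ) < ((K+R+2).choose (K+1) : ℚ) := by
      exact_mod_cast Nat.choose_pos (by omega)
    have q1 : ((K:ℚ)+R+2) * ((K+R+1).choose K : ℚ) = ((K+R+2).choose (K+1) : ℚ) * ((K:ℚ)+1) := by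
      exact_mod_cast congrArg (Nat.cast : ℕ → ℚ) hmul1
    have q2 : ((K:ℚ)+R+2) * ((K+R+1).choose K : ℚ) = ((K+R+2).choose K : ℚ) * ((R:ℚ)+2) := by
      exact_mod_cast congrArg (Nat.cast : ℕ → ℚ) hmul2
    have harg1 : K+(R+1)+1 = K+R+2 := by omega
    have harg2 : K+1+R+1 = K+R+2 := by omega
    rw [harg1, harg2]
    have hb : (((K+R+2).choose K : ℕ) : ℚ) = ((K:ℚ)+R+2) * ((K+R+1).choose K : ℚ) / ((R:ℚ)+2) := by
      rw [q2]; field_simp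
    have hcc : (((K+R+2).choose (K+1) : ℕ) : ℚ)
        = ((K:ℚ)+R+2) * ((K+R+1).choose K : ℚ) / ((K:ℚ)+1) := by
      rw [eq_div_iff (by positivity)]; linarith [q1]
    rw [hb, hcc]
    simp only [pow_zero, Nat.choose_zero_right, Nat.cast_one, one_mul]
    have hKR : (0:ℚ) < (K:ℚ)+R+2 := by positivity
    field_simp
    push_cast
    ring

noncomputable def ell : PowerSeries ℚ := PowerSeries.mk fun i => (-1)^i / (i+1)

lemma T_ell : T ell = (1 + X) * ell := by
  ext k
  rw [T, PowerSeries.coeff_mk, add_mul, one_mul, map_add]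
  cases k with
  | zero =>
    rw [Finset.sum_range_one, coeff_sg_pow]
    simp [ell]
  | succ K =>
    rw [PowerSeries.coeff_succ_X_mul, Finset.sum_range_succ']
    have f0 : (PowerSeries.coeff 0) ell * (PowerSeries.coeff (K+1)) (sg^0) = 0 := by
      rw [coeff_sg_pow, if_pos (by omega)]
      rw [show K+1-1 = K by omega, show K+1-0 = K+1 by omega,
        Nat.choose_eq_zero_of_lt (by omega)]
      simp
    have hterm : ∀ j ∈ Finset.range (K+1),
        (PowerSeries.coeff (j+1)) ell * (PowerSeries.coeff (K+1)) (sg^(j+1))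
        = (-1:ℚ)^(K+1) * -((-1:ℚ)^j * ((K.choose j : ℕ):ℚ) / ((j:ℚ)+(1:ℕ)+1)) := by
      intro j hj
      simp only [Finset.mem_range] at hj
      rw [ell, PowerSeries.coeff_mk, coeff_sg_pow, if_pos (by omega),
        show K+1-1 = K by omega, show K+1-(j+1) = K-j by omega,
        Nat.choose_symm (by omega : j ≤ K)]
      push_cast
      ring
    rw [Finset.sum_congr rfl hterm, f0, add_zero, ← Finset.mul_sum,
      Finset.sum_neg_distrib, S_eq K 1]
    have hch : (2:ℚ) * (((K+2).choose K : ℕ):ℚ) = ((K:ℚ)+2) * ((K:ℚ)+1) := by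
      have h1 : (K+2) * ((K+1).choose 1) = ((K+2).choose 2) * 2 := by
        simpa using Nat.add_one_mul_choose_eq (K+1) 1
      have h2 : (K+2).choose K = (K+2).choose 2 := by
        rw [← Nat.choose_symm (by omega : 2 ≤ K+2), show K+2-2 = K by omega]
      rw [h2]
      rw [Nat.choose_one_right] at h1
      have := congrArg (Nat.cast : ℕ → ℚ) h1
      push_cast at this
      linarith
    rw [ell, PowerSeries.coeff_mk, PowerSeries.coeff_mk]
    rw [show K+1+1 = K+2 by omega]
    push_cast
    have hpos : ((((K+2).choose K : ℕ)):ℚ) ≠ 0 := by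
      have : (0:ℚ) < (((K+2).choose K : ℕ):ℚ) := by exact_mod_cast Nat.choose_pos (by omega)
      linarith
    field_simp
    rw [show ((1:ℚ)+1) = 2 by norm_num, hch]
    ring

lemma coeff_one_add_X_pow' (d j : ℕ) :
    (PowerSeries.coeff j) ((1+X)^d) = (d.choose j : ℚ) := by
  have : ((1+X : ℚ⟦X⟧))^d = (((1 + Polynomial.X)^d : Polynomial ℚ) : ℚ⟦X⟧) := by
    push_cast
    simp
  rw [this, Polynomial.coeff_coe, Polynomial.coeff_one_add_X_pow]

lemma coeff_mul_T (P F : PowerSeries ℚ) (k : ℕ) :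
    (PowerSeries.coeff k) (P * T F) = ∑ n ∈ Finset.range (k+1),
      (PowerSeries.coeff n) F * (PowerSeries.coeff k) (P * sg^n) := by
  rw [PowerSeries.coeff_mul, Finset.Nat.sum_antidiagonal_eq_sum_range_succ_mk]
  have h1 : ∀ i ∈ Finset.range (k+1),
      (PowerSeries.coeff i) P * (PowerSeries.coeff (k-i)) (T F)
      = ∑ n ∈ Finset.range (k+1), (PowerSeries.coeff n) F *
          ((PowerSeries.coeff i) P * (PowerSeries.coeff (k-i)) (sg^n)) := by
    intro i hi
    simp only [Finset.mem_range] at hi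
    rw [coeff_T F (show k - i ≤ k by omega), Finset.mul_sum]
    apply Finset.sum_congr rfl
    intro n _
    ring
  rw [Finset.sum_congr rfl h1, Finset.sum_comm]
  apply Finset.sum_congr rfl
  intro n _
  rw [← Finset.mul_sum]
  congr 1
  rw [PowerSeries.coeff_mul, Finset.Nat.sum_antidiagonal_eq_sum_range_succ_mk]
lemma T_pow (F : PowerSeries ℚ) (n : ℕ) : T (F^n) = (T F)^n := by
  induction n with
  | zero => simpa using T_one
  | succ n ih => rw [pow_succ, pow_succ, T_mul, ih]

theorem coeff_even_zero (m : ℕ) (heven : Even m) (hm : 0 < m) :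
    PowerSeries.coeff (m + 1) (ell⁻¹ ^ m) = 0 := by
  have hc0 : PowerSeries.constantCoeff ell = 1 := by
    rw [ell, PowerSeries.constantCoeff_mk]; norm_num
  have hinv : ell⁻¹ * ell = 1 := PowerSeries.inv_mul_cancel ell (by rw [hc0]; norm_num)
  set F := ell⁻¹ ^ m with hF
  have h1 : F * ell^m = 1 := by rw [hF, ← mul_pow, hinv, one_pow]
  have h2 : T F * ((1+X) * ell)^m = 1 := by
    rw [← T_ell, ← T_pow, ← T_mul, h1, T_one]
  have hne : (ell^m : ℚ⟦X⟧) ≠ 0 := by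
    intro h
    have := congrArg (PowerSeries.constantCoeff) h
    rw [map_pow, hc0, one_pow, map_zero] at this
    norm_num at this
  have h3 : ((1+X)^m * T F) * ell^m = F * ell^m := by
    calc ((1+X)^m * T F) * ell^m = T F * ((1+X) * ell)^m := by rw [mul_pow]; ring
      _ = 1 := h2
      _ = F * ell^m := h1.symm
  have h4 : (1+X)^m * T F = F := mul_right_cancel₀ hne h3
  -- coefficient extraction
  have h5 : (PowerSeries.coeff (m+1)) F = ∑ n ∈ Finset.range (m+2),
      (PowerSeries.coeff n) F * (PowerSeries.coeff (m+1)) ((1+X)^m * sg^n) := by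
    rw [← coeff_mul_T, h4]
  have w0 : ∀ n ∈ Finset.range (m+1),
      (PowerSeries.coeff (m+1)) ((1+X)^m * sg^n) = 0 := by
    intro n hn
    simp only [Finset.mem_range] at hn
    have hnm : n ≤ m := by omega
    have hsplit : (1+X:ℚ⟦X⟧)^m = (1+X)^(m-n) * (1+X)^n := by
      rw [← pow_add]; congr 1; omega
    have key : (1+X:ℚ⟦X⟧)^m * sg^n = (-1)^n * (X^n * (1+X)^(m-n)) := by
      calc (1+X:ℚ⟦X⟧)^m * sg^n
          = ((-1)^n * (X^n * (1+X)^(m-n))) * ((1+X)*uu)^n := by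
            rw [hsplit, sg_pow, mul_pow]; ring
        _ = (-1)^n * (X^n * (1+X)^(m-n)) := by
            rw [one_add_X_mul_uu, one_pow, mul_one]
    rw [key]
    have hC : ((-1 : PowerSeries ℚ)^n) = PowerSeries.C ((-1)^n) := by
      rw [map_pow, map_neg, map_one]
    rw [hC, PowerSeries.coeff_C_mul, PowerSeries.coeff_X_pow_mul', if_pos (by omega),
      coeff_one_add_X_pow', Nat.choose_eq_zero_of_lt (by omega)]
    simp
  have w1 : (PowerSeries.coeff (m+1)) ((1+X)^m * sg^(m+1)) = -1 := by
    have key : (1+X:ℚ⟦X⟧)^m * sg^(m+1) = (-1)^(m+1) * (X^(m+1) * uu) := by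
      calc (1+X:ℚ⟦X⟧)^m * sg^(m+1)
          = ((-1)^(m+1) * (X^(m+1) * uu)) * ((1+X)*uu)^m := by
            rw [sg_pow, pow_succ uu m, mul_pow]; ring
        _ = (-1)^(m+1) * (X^(m+1) * uu) := by
            rw [one_add_X_mul_uu, one_pow, mul_one]
    rw [key]
    have hC : ((-1 : PowerSeries ℚ)^(m+1)) = PowerSeries.C ((-1)^(m+1)) := by
      rw [map_pow, map_neg, map_one]
    rw [hC, PowerSeries.coeff_C_mul, PowerSeries.coeff_X_pow_mul', if_pos (le_refl _),
      Nat.sub_self, PowerSeries.coeff_zero_eq_constantCoeff_apply, uu,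
      PowerSeries.constantCoeff_mk]
    rw [Odd.neg_one_pow heven.add_one]
    norm_num
  rw [Finset.sum_range_succ, Finset.sum_eq_zero (fun n hn => by rw [w0 n hn, mul_zero]),
    zero_add, w1] at h5
  linarith
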